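/- Define H, G : ℝ² → ℝ by H(x,y) = −a(x² + y² + xy) + b(x²y + xy²) + c(x² + y² + xy)² + a s₊²/3 + 2b s₊³/27 − c s₊⁴/9 and G(x,y) = (x + s₊/3)² + (y + s₊/3)² + (x + y + 2s₊/3)². Then there exists δ > 0 such that for all (x,y) ∈ ℝ² with 0 < G(x,y) ≤ δ one has (b s₊/12) G(x,y) ≤ H(x,y) ≤ (3a + 3b s₊/4) G(x,y). -/

import Mathlib

open Matrix Finset

noncomputable section

abbrev Mat := Matrix (Fin 3) (Fin 3) ℝ
abbrev Vec3 := Fin 3 → ℝ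

/-- The Frobenius inner product `A : B`. -/
def frob (A B : Mat) : ℝ := ∑ i : Fin 3, ∑ j : Fin 3, A i j * B i j

/-- The squared Frobenius norm `|A|²`. -/
def mnormSq (A : Mat) : ℝ := frob A A

/-- `s₊ = (b + √(b² + 24 a c)) / (4c)`. -/
def sPlus (a b c : ℝ) : ℝ := (b + Real.sqrt (b ^ 2 + 24 * a * c)) / (4 * c)

/-- `J(Q) = (a − c|Q|²)Q + bQ² − (b/3)|Q|² Id`. -/
def Jmap (a b c : ℝ) (Q : Mat) : Mat :=
  (a - c * mnormSq Q) • Q + b • (Q * Q) - (b / 3 * mnormSq Q) • (1 : Mat)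

/-- The bulk energy `f_B(Q) = −(a/2)|Q|² − (b/3)tr(Q³) + (c/4)|Q|⁴`. -/
def fB (a b c : ℝ) (Q : Mat) : ℝ :=
  -(a / 2) * mnormSq Q - b / 3 * (Q * Q * Q).trace + c / 4 * mnormSq Q ^ 2

/-- The normalized (nonnegative) bulk energy `f̃_B`. -/
def ftB (a b c : ℝ) (Q : Mat) : ℝ :=
  fB a b c Q + a * sPlus a b c ^ 2 / 3 + 2 * b * sPlus a b c ^ 3 / 27 - c * sPlus a b c ^ 4 / 9

/-- The limit manifold `𝒩 = { s₊(n⊗n − Id/3) : |n| = 1 }`. -/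
def NSet (a b c : ℝ) : Set Mat :=
  {Q | ∃ n : Vec3, n ⬝ᵥ n = 1 ∧ Q = sPlus a b c • (vecMulVec n n - (1 / 3 : ℝ) • (1 : Mat))}

/-- The space `𝒬₀` of symmetric traceless 3×3 matrices, as a submodule. -/
def Q0 : Submodule ℝ Mat where
  carrier := {A | A.IsSymm ∧ A.trace = 0}
  add_mem' := by
    rintro A B ⟨hA1, hA2⟩ ⟨hB1, hB2⟩
    exact ⟨hA1.add hB1, by simp [Matrix.trace_add, hA2, hB2]⟩
  zero_mem' := ⟨by simp [Matrix.IsSymm], by simp⟩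
  smul_mem' := by
    rintro r A ⟨hA1, hA2⟩
    refine ⟨?_, by simp [Matrix.trace_smul, hA2]⟩
    unfold Matrix.IsSymm
    rw [Matrix.transpose_smul, hA1]

/-- Distance (in Frobenius norm) from `Q` to the manifold `𝒩`. -/
def distN (a b c : ℝ) (Q : Mat) : ℝ :=
  sInf ((fun P => Real.sqrt (mnormSq (Q - P))) '' NSet a b c)

/-- `H(x,y)`: the normalized bulk energy in the eigenvalue variables. -/
def Hfun (a b c : ℝ) (x y : ℝ) : ℝ :=
  -a * (x ^ 2 + y ^ 2 + x * y) + b * (x ^ 2 * y + x * y ^ 2)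
    + c * (x ^ 2 + y ^ 2 + x * y) ^ 2
    + a * sPlus a b c ^ 2 / 3 + 2 * b * sPlus a b c ^ 3 / 27 - c * sPlus a b c ^ 4 / 9

/-- `G(x,y)`: the squared distance of the eigenvalue triple to the minimizing one. -/
def Gfun (a b c : ℝ) (x y : ℝ) : ℝ :=
  (x + sPlus a b c / 3) ^ 2 + (y + sPlus a b c / 3) ^ 2
    + (x + y + 2 * sPlus a b c / 3) ^ 2

/-- Auxiliary: bound on a product from bounds on the factors. -/
private lemma mul_bounds_aux {w T K e : ℝ} (h1 : w ≤ e) (h2 : -e ≤ w)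
    (h3 : T ≤ K) (h4 : -K ≤ T) : -(e * K) ≤ w * T ∧ w * T ≤ e * K := by
  constructor <;>
    nlinarith [mul_nonneg (sub_nonneg.2 h1) (sub_nonneg.2 h3),
      mul_nonneg (sub_nonneg.2 h2) (sub_nonneg.2 h4),
      mul_nonneg (sub_nonneg.2 h1) (sub_nonneg.2 h4),
      mul_nonneg (sub_nonneg.2 h2) (sub_nonneg.2 h3)]

set_option maxHeartbeats 1000000 in
/-- Near the minimizing eigenvalues, `H` is comparable to `G`:
`(b s₊/12) G ≤ H ≤ (3a + 3b s₊/4) G` whenever `0 < G ≤ δ`. -/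
theorem Hfun_comparable_Gfun
    (a b c : ℝ) (ha : 0 < a) (hb : 0 < b) (hc : 0 < c) :
    ∃ δ > 0, ∀ x y : ℝ, 0 < Gfun a b c x y → Gfun a b c x y ≤ δ →
      b * sPlus a b c / 12 * Gfun a b c x y ≤ Hfun a b c x y ∧
        Hfun a b c x y ≤ (3 * a + 3 * b * sPlus a b c / 4) * Gfun a b c x y := by
  set s := sPlus a b c with hsdef
  have hr2 : Real.sqrt (b ^ 2 + 24 * a * c) ^ 2 = b ^ 2 + 24 * a * c := by
    rw [Real.sq_sqrt]; positivity
  have hrpos : 0 < Real.sqrt (b ^ 2 + 24 * a * c) := by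
    apply Real.sqrt_pos.2; positivity
  have hspos : 0 < s := by
    rw [hsdef, sPlus]; positivity
  have hs2 : 2 * c * s ^ 2 = b * s + 3 * a := by
    rw [hsdef, sPlus]
    field_simp
    have hr2' : Real.sqrt (b ^ 2 + c * 24 * a) ^ 2 = b ^ 2 + c * 24 * a := by
      rw [Real.sq_sqrt]; positivity
    nlinarith [hr2']
  -- the margin ε
  set M : ℝ := b / 2 + c * s + c / 4 with hM
  have hMpos : 0 < M := by positivity
  set ε : ℝ := min 1 (b * s / (12 * M)) with hε
  have hεpos : 0 < ε := by
    apply lt_min one_pos; positivity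
  have hε1 : ε ≤ 1 := min_le_left _ _
  have hεM : ε * M ≤ b * s / 12 := by
    have h2 : ε ≤ b * s / (12 * M) := min_le_right _ _
    calc ε * M ≤ (b * s / (12 * M)) * M := by
          exact mul_le_mul_of_nonneg_right h2 hMpos.le
      _ = b * s / 12 := by field_simp
  refine ⟨ε ^ 2, by positivity, fun x y hG0 hGδ => ?_⟩
  set u : ℝ := x + s / 3 with hu
  set v : ℝ := y + s / 3 with hv
  have hGfun : Gfun a b c x y = u ^ 2 + v ^ 2 + (u + v) ^ 2 := by
    rw [Gfun, ← hsdef, hu, hv]; ring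
  set G : ℝ := Gfun a b c x y with hGd
  set P : ℝ := u ^ 2 + u * v + v ^ 2 with hP
  have hPG : 2 * P = G := by rw [hGfun, hP]; ring
  have hkey : Hfun a b c x y =
      3 * a / 2 * (u + v) ^ 2 + b * s / 2 * (u ^ 2 + v ^ 2)
        + (u + v) * (b * (u * v) - 2 * c * s * P) + c * P ^ 2 := by
    rw [Hfun, ← hsdef, hP, hu, hv]
    linear_combination (s ^ 2 / 9 + 2 / 3 * y * s + 5 / 6 * y ^ 2 + 2 / 3 * x * s
      + 4 / 3 * x * y + 5 / 6 * x ^ 2) * hs2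
  clear_value P G u v ε M s
  -- basic bounds
  have hGε : G ≤ ε := le_trans hGδ (by nlinarith)
  have hw2 : (u + v) ^ 2 ≤ G := by rw [hGfun]; nlinarith [sq_nonneg u, sq_nonneg v]
  have huv2 : u ^ 2 + v ^ 2 ≤ G := by rw [hGfun]; nlinarith [sq_nonneg (u + v)]
  have hwle : u + v ≤ ε := by nlinarith [hw2, hGδ, hεpos]
  have hwge : -ε ≤ u + v := by nlinarith [hw2, hGδ, hεpos]
  have hPnn : 0 ≤ P := by nlinarith [hPG, hG0]
  have hGnn : 0 ≤ G := hG0.le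
  -- bound on the cubic remainder term T := b uv - 2 c s P
  have hT1 : b * (u * v) - 2 * c * s * P ≤ (b / 2 + c * s) * G := by
    nlinarith [sq_nonneg (u - v), hPG, huv2, mul_pos hc hspos, hb]
  have hT2 : -((b / 2 + c * s) * G) ≤ b * (u * v) - 2 * c * s * P := by
    nlinarith [sq_nonneg (u + v), hPG, huv2, mul_pos hc hspos, hb]
  have hTnn : 0 ≤ (b / 2 + c * s) * G := by positivity
  -- |w * T| ≤ ε * (b/2 + cs) * G
  obtain ⟨hwT2, hwT1⟩ := mul_bounds_aux hwle hwge hT1 hT2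
  -- quartic term
  have hP2 : c * P ^ 2 ≤ c / 4 * ε * G := by
    have hPval : P = G / 2 := by linarith
    rw [hPval]
    nlinarith [mul_nonneg (mul_nonneg hc.le (sub_nonneg.2 hGε)) hG0.le]
  have hP2nn : 0 ≤ c * P ^ 2 := by positivity
  -- quadratic part bounds
  have hQ2lb : b * s / 6 * G ≤ 3 * a / 2 * (u + v) ^ 2 + b * s / 2 * (u ^ 2 + v ^ 2) := by
    rw [hGfun]
    linarith [mul_nonneg (mul_nonneg hb.le hspos.le) (sq_nonneg (u - v)),
      mul_nonneg ha.le (sq_nonneg (u + v))]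
  have hQ2ub : 3 * a / 2 * (u + v) ^ 2 + b * s / 2 * (u ^ 2 + v ^ 2)
      ≤ (3 * a / 2 + b * s / 2) * G := by
    have h1 := mul_le_mul_of_nonneg_left hw2 (by positivity : (0:ℝ) ≤ 3 * a / 2)
    have h2 := mul_le_mul_of_nonneg_left huv2 (by positivity : (0:ℝ) ≤ b * s / 2)
    linarith [h1, h2]
  have hεMG : ε * ((b / 2 + c * s) * G) + c / 4 * ε * G ≤ b * s / 12 * G := by
    have h := mul_le_mul_of_nonneg_right hεM hGnn
    rw [hM] at h
    linarith [h]
  have hcεG : 0 ≤ c / 4 * ε * G := by positivity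
  constructor
  · rw [hkey]
    linarith [hwT2, hP2nn, hQ2lb, hεMG, hcεG]
  · rw [hkey]
    linarith [hwT1, hP2, hQ2ub, hεMG, mul_nonneg (mul_pos hb hspos).le hGnn,
      mul_nonneg ha.le hGnn]
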